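/- The first regularized smoothing factor has the limiting behavior: for every δ > 0, the function r ↦ s₁(r/δ)/r, defined for r ≠ 0, tends to 16/(3δ√π) as r → 0. -/

import Mathlib

open Real Filter Topology

/-- The error function erf(r) = (2/√π)·∫₀ʳ exp(−t²) dt. -/
noncomputable def erf (r : ℝ) : ℝ := (2 / Real.sqrt π) * ∫ t in (0 : ℝ)..r, Real.exp (-t ^ 2)

/-- The first smoothing factor s₁. -/
noncomputable def s₁ (r : ℝ) : ℝ :=
  erf r - (2 / 3) * r * (2 * r ^ 2 - 5) * Real.exp (-r ^ 2) / Real.sqrt π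

/-- The second smoothing factor s₂. -/
noncomputable def s₂ (r : ℝ) : ℝ :=
  erf r - (2 / 3) * r * (4 * r ^ 4 - 14 * r ^ 2 + 3) * Real.exp (-r ^ 2) / Real.sqrt π

lemma hasDerivAt_erf_zero : HasDerivAt erf (2 / Real.sqrt π) 0 := by
  have hc : Continuous fun t : ℝ => Real.exp (-t ^ 2) := by continuity
  have hint : HasDerivAt (fun r : ℝ => ∫ t in (0:ℝ)..r, Real.exp (-t ^ 2))
      (Real.exp (-(0:ℝ) ^ 2)) 0 :=
    intervalIntegral.integral_hasDerivAt_right (hc.intervalIntegrable _ _)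
      (hc.stronglyMeasurableAtFilter _ _) hc.continuousAt
  have := hint.const_mul (2 / Real.sqrt π)
  simp [erf] at this ⊢; exact this

lemma hasDerivAt_s1_zero : HasDerivAt s₁ (16 / (3 * Real.sqrt π)) 0 := by
  have h1 : HasDerivAt (fun x : ℝ => (2/3) * x * (2 * x ^ 2 - 5)) (-(10/3)) 0 := by
    have : HasDerivAt (fun x : ℝ => (2/3) * x * (2 * x ^ 2 - 5))
        ((2/3) * ((2 * (0:ℝ) ^ 2 - 5)) + ((2/3) * 0) * (2 * (2 * 0) * 1)) 0 := by
      have ha : HasDerivAt (fun x : ℝ => (2/3) * x) (2/3) 0 := by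
        simpa using (hasDerivAt_id (0:ℝ)).const_mul (2/3)
      have hb : HasDerivAt (fun x : ℝ => 2 * x ^ 2 - 5) (2 * (2 * 0) * 1) (0:ℝ) := by
        have := ((hasDerivAt_pow 2 (0:ℝ)).const_mul 2).sub_const 5
        simpa using this
      have := ha.mul hb
      simp at this ⊢; exact this
    convert this using 1; norm_num
  have h2 : HasDerivAt (fun x : ℝ => Real.exp (-x ^ 2)) 0 0 := by
    have hp : HasDerivAt (fun x : ℝ => -x ^ 2) (-(2 * 0)) (0:ℝ) := by
      have := (hasDerivAt_pow 2 (0:ℝ)).neg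
      simp at this ⊢; exact this
    have := (Real.hasDerivAt_exp (-(0:ℝ) ^ 2)).comp 0 hp
    simp at this ⊢; exact this
  have h3 : HasDerivAt (fun x : ℝ => (2/3) * x * (2 * x ^ 2 - 5) * Real.exp (-x ^ 2) / Real.sqrt π)
      (-(10/3) / Real.sqrt π) 0 := by
    have := (h1.mul h2).div_const (Real.sqrt π)
    simpa using this
  have h4 := hasDerivAt_erf_zero.sub h3
  have heq : 2 / Real.sqrt π - -(10/3) / Real.sqrt π = 16 / (3 * Real.sqrt π) := by
    rw [div_sub_div_same]
    rw [show (2:ℝ) - -(10/3) = 16/3 by norm_num, div_div]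
  rw [heq] at h4
  exact h4.congr_deriv rfl

lemma s1_zero : s₁ 0 = 0 := by
  simp [s₁, erf]

/-- For every δ > 0, s₁(r/δ)/r tends to 16/(3δ√π) as r → 0 (r ≠ 0). -/
theorem s1_limit_at_zero (δ : ℝ) (hδ : 0 < δ) :
    Tendsto (fun r : ℝ => s₁ (r / δ) / r) (𝓝[≠] 0)
      (𝓝 (16 / (3 * δ * Real.sqrt π))) := by
  have hdiv : HasDerivAt (fun r : ℝ => r / δ) (1 / δ) 0 := by
    simpa using (hasDerivAt_id (0:ℝ)).div_const δ
  have hcomp : HasDerivAt (fun r : ℝ => s₁ (r / δ))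
      (16 / (3 * Real.sqrt π) * (1 / δ)) 0 := by
    have h0 : HasDerivAt s₁ (16 / (3 * Real.sqrt π)) ((0:ℝ) / δ) := by
      simpa using hasDerivAt_s1_zero
    have := h0.comp 0 hdiv
    simp [one_div] at this ⊢; exact this
  have := hasDerivAt_iff_tendsto_slope.mp hcomp
  have heq : (16:ℝ) / (3 * Real.sqrt π) * (1 / δ) = 16 / (3 * δ * Real.sqrt π) := by
    field_simp
  rw [heq] at this
  refine this.congr (fun r => ?_)
  simp [slope_def_field, s1_zero]
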